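/- arXiv:2101.03978 — 3 statements merged into one kernel-verified Lean document; each statement's English description precedes it below -/
import Mathlib

section
/- Let σ be a permutation of a finite set S of positive integers whose action on S is a single cycle of length m, and let b ≥ 1 be an integer. Then the number of b-local minima of σ is at most m/(b+1). -/
lemma perm_shift (σ : Equiv.Perm ℕ) (x y : ℕ) (i j : ℕ)
    (h : (⇑σ)^[i] x = (⇑σ)^[j] y) : (σ ^ ((i : ℤ) - (j : ℤ))) x = y := by
  have h' : (σ ^ (i : ℤ)) x = (σ ^ (j : ℤ)) y := by
    rw [zpow_natCast, zpow_natCast, ← Equiv.Perm.iterate_eq_pow, ← Equiv.Perm.iterate_eq_pow]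
    exact h
  have h2 := congrArg (⇑(σ ^ (-(j : ℤ)))) h'
  rw [← Equiv.Perm.mul_apply, ← Equiv.Perm.mul_apply, ← zpow_add, ← zpow_add] at h2
  rw [show -(j : ℤ) + j = 0 by ring, zpow_zero] at h2
  rw [show (i : ℤ) - j = -(j : ℤ) + i by ring]
  simpa using h2

/-- Let `σ` be a permutation of a finite set `S` of positive integers whose
action on `S` is a single cycle of length `m`, and let `b ≥ 1`.  An element `x ∈ S` is a
`b`-local minimum if `x < σ^k(x)` for every `k ∈ {−b, …, b} \ {0}`.  Then the number of
`b`-local minima of `σ` is at most `m / (b + 1)`. -/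
theorem card_local_minima_le (σ : Equiv.Perm ℕ) (S : Finset ℕ) (b : ℕ) (hb : 1 ≤ b)
    (hpos : ∀ i ∈ S, 0 < i)
    (hfix : ∀ i ∉ S, σ i = i)
    (hcycle : ∀ x ∈ S, ∀ y ∈ S, ∃ k : ℕ, (⇑σ)^[k] x = y)
    (m : ℕ) (hm : m = S.card) :
    (((S.filter fun x =>
        ∀ k ∈ Finset.Icc (-(b : ℤ)) (b : ℤ), k ≠ 0 → x < (σ ^ k) x).card : ℝ))
      ≤ (m : ℝ) / ((b : ℝ) + 1) := by
  classical
  set P : ℕ → Prop := fun x =>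
    ∀ k ∈ Finset.Icc (-(b : ℤ)) (b : ℤ), k ≠ 0 → x < (σ ^ k) x with hP
  set T := S.filter fun x => P x with hT
  -- σ maps S into S
  have hS : ∀ x ∈ S, σ x ∈ S := by
    intro x hx
    by_contra h
    have h1 : σ (σ x) = σ x := hfix _ h
    have h2 : σ x = x := σ.injective h1
    rw [h2] at h; exact h hx
  have hSit : ∀ x ∈ S, ∀ n : ℕ, (⇑σ)^[n] x ∈ S := by
    intro x hx n
    induction n with
    | zero => simpa using hx
    | succ n ih => rw [Function.iterate_succ_apply']; exact hS _ ih
  -- disjoint translates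
  set f : ℕ → Finset ℕ := fun x => (Finset.range (b + 1)).image fun k => (⇑σ)^[k] x with hf
  have key : ∀ x ∈ T, ∀ y ∈ T, ∀ i ∈ Finset.range (b + 1), ∀ j ∈ Finset.range (b + 1),
      (⇑σ)^[i] x = (⇑σ)^[j] y → x = y := by
    intro x hx y hy i hi j hj hij
    rw [Finset.mem_range] at hi hj
    rw [hT, Finset.mem_filter] at hx hy
    by_cases hij' : i = j
    · subst hij'
      exact Function.Injective.iterate σ.injective i hij
    · have hk : ((i : ℤ) - (j : ℤ)) ∈ Finset.Icc (-(b : ℤ)) (b : ℤ) := by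
        rw [Finset.mem_Icc]; omega
      have hk0 : ((i : ℤ) - (j : ℤ)) ≠ 0 := by omega
      have hk' : ((j : ℤ) - (i : ℤ)) ∈ Finset.Icc (-(b : ℤ)) (b : ℤ) := by
        rw [Finset.mem_Icc]; omega
      have hk0' : ((j : ℤ) - (i : ℤ)) ≠ 0 := by omega
      have h1 : (σ ^ ((j : ℤ) - (i : ℤ))) y = x := perm_shift σ y x j i hij.symm
      have h2 : (σ ^ ((i : ℤ) - (j : ℤ))) x = y := perm_shift σ x y i j hij
      have hx2 := hx.2 _ hk hk0
      have hy2 := hy.2 _ hk' hk0' 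
      rw [h2] at hx2
      rw [h1] at hy2
      omega
  have hcardf : ∀ x ∈ T, (f x).card = b + 1 := by
    intro x hx
    rw [hf]
    rw [Finset.card_image_of_injOn, Finset.card_range]
    intro i hi j hj hij
    rw [Finset.mem_coe, Finset.mem_range] at hi hj
    by_contra hne
    have hk' : ((j : ℤ) - (i : ℤ)) ∈ Finset.Icc (-(b : ℤ)) (b : ℤ) := by
      rw [Finset.mem_Icc]; omega
    have hk0' : ((j : ℤ) - (i : ℤ)) ≠ 0 := by omega
    rw [hT, Finset.mem_filter] at hx
    have h2 : (σ ^ ((j : ℤ) - (i : ℤ))) x = x := perm_shift σ x x j i (by simpa using hij.symm)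
    have := hx.2 _ hk' hk0'
    rw [h2] at this
    omega
  have hdisj : (T : Set ℕ).PairwiseDisjoint f := by
    intro x hx y hy hne
    simp only [Function.onFun]
    rw [Finset.disjoint_left]
    intro a ha hay
    rw [hf, Finset.mem_image] at ha hay
    obtain ⟨i, hi, hia⟩ := ha
    obtain ⟨j, hj, hja⟩ := hay
    exact hne (key x hx y hy i hi j hj (by rw [hia, hja]))
  have hsub : T.biUnion f ⊆ S := by
    intro a ha
    rw [Finset.mem_biUnion] at ha
    obtain ⟨x, hx, hax⟩ := ha
    rw [hf, Finset.mem_image] at hax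
    obtain ⟨i, hi, hia⟩ := hax
    rw [← hia]
    exact hSit x (Finset.mem_filter.mp hx).1 i
  have hcount : T.card * (b + 1) ≤ m := by
    rw [hm]
    calc T.card * (b + 1) = ∑ x ∈ T, (f x).card := by
          rw [Finset.sum_congr rfl hcardf, Finset.sum_const, smul_eq_mul]
      _ = (T.biUnion f).card := (Finset.card_biUnion hdisj).symm
      _ ≤ S.card := Finset.card_le_card hsub
  rw [le_div_iff₀ (by positivity)]
  have : (T.card : ℝ) * ((b : ℝ) + 1) ≤ (m : ℝ) := by exact_mod_cast hcount
  exact this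
end

section
/- For every cycle C of π and every integer r ≥ 1, the number of elements of C on level r satisfies |E_r ∩ C| ≤ |C| / (b+1)^{r−1}. -/
attribute [local instance] Classical.propDecidable

variable {n : ℕ}

/-- The first element of `E` encountered strictly after `x` when following `π` along its cycle
(`x` itself if no element of `E` is reachable).  For `E = E_r` this is the map `π_r`. -/
noncomputable def nextIn (π : Equiv.Perm (Fin n)) (E : Finset (Fin n)) (x : Fin n) : Fin n :=
  if h : ∃ k, 0 < k ∧ (⇑π)^[k] x ∈ E then (⇑π)^[Nat.find h] x else x

/-- `b`-fold iteration of `nextIn`; for `E = E_r` this is `π_r^b`. -/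
noncomputable def stepB (π : Equiv.Perm (Fin n)) (b : ℕ) (E : Finset (Fin n)) (x : Fin n) :
    Fin n :=
  (nextIn π E)^[b] x

/-- `level π b r` is the set `E_{r+1}` (0-indexed): `level π b 0 = E_1 = [n]`, and `E_{r+1}`
consists of the elements `i` of `E_r` with `i < π_r^k(i)` for all `k ∈ {−b,…,b} \ {0}`. -/
noncomputable def level (π : Equiv.Perm (Fin n)) (b : ℕ) : ℕ → Finset (Fin n)
  | 0 => Finset.univ
  | r + 1 =>
    (level π b r).filter fun i =>
      (∀ k ∈ Finset.Icc 1 b, i < (nextIn π (level π b r))^[k] i) ∧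
      (∀ k ∈ Finset.Icc 1 b, i < (nextIn π⁻¹ (level π b r))^[k] i)

/-- The cycle of `π` containing `x`, as a finset. -/
def cycleOfF (π : Equiv.Perm (Fin n)) (x : Fin n) : Finset (Fin n) :=
  (Finset.range n).image fun k => (⇑π)^[k] x

/-! ### Auxiliary lemmas -/

lemma perm_periodic (π : Equiv.Perm (Fin n)) (x : Fin n) :
    x ∈ Function.periodicPts ⇑π :=
  ⟨orderOf π, orderOf_pos π, by
    show (⇑π)^[orderOf π] x = x
    simp [Equiv.Perm.iterate_eq_pow, pow_orderOf_eq_one]⟩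

lemma exists_iter_mem {π : Equiv.Perm (Fin n)} {E : Finset (Fin n)} {x : Fin n}
    (hx : x ∈ E) : ∃ k, 0 < k ∧ (⇑π)^[k] x ∈ E :=
  ⟨Function.minimalPeriod ⇑π x,
    Function.minimalPeriod_pos_of_mem_periodicPts (perm_periodic π x),
    by rw [Function.iterate_minimalPeriod]; exact hx⟩

lemma inv_iter_iter (π : Equiv.Perm (Fin n)) (k : ℕ) (x : Fin n) :
    (⇑π⁻¹)^[k] ((⇑π)^[k] x) = x :=
  (Function.LeftInverse.iterate (show Function.LeftInverse ⇑π⁻¹ ⇑π from π.symm_apply_apply) k) x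

lemma inv_iter_sub (π : Equiv.Perm (Fin n)) {k m : ℕ} (hk : k ≤ m) (x : Fin n) :
    (⇑π⁻¹)^[k] ((⇑π)^[m] x) = (⇑π)^[m - k] x := by
  have h : (⇑π)^[m] x = (⇑π)^[k] ((⇑π)^[m - k] x) := by
    rw [← Function.iterate_add_apply, Nat.add_sub_cancel' hk]
  rw [h, inv_iter_iter]

lemma nextIn_mem {π : Equiv.Perm (Fin n)} {E : Finset (Fin n)} {x : Fin n}
    (hx : x ∈ E) : nextIn π E x ∈ E := by
  have h := exists_iter_mem (π := π) hx
  rw [nextIn, dif_pos h]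
  exact (Nat.find_spec h).2

lemma nextIn_leftInv {π : Equiv.Perm (Fin n)} {E : Finset (Fin n)} {x : Fin n}
    (hx : x ∈ E) : nextIn π⁻¹ E (nextIn π E x) = x := by
  have h := exists_iter_mem (π := π) hx
  have hval : nextIn π E x = (⇑π)^[Nat.find h] x := dif_pos h
  rw [hval]
  have hm0 : 0 < Nat.find h := (Nat.find_spec h).1
  have h' : ∃ k, 0 < k ∧ (⇑π⁻¹)^[k] ((⇑π)^[Nat.find h] x) ∈ E :=
    ⟨Nat.find h, hm0, by rw [inv_iter_iter]; exact hx⟩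
  rw [nextIn, dif_pos h']
  have hfind : Nat.find h' = Nat.find h := by
    rw [Nat.find_eq_iff]
    refine ⟨⟨hm0, by rw [inv_iter_iter]; exact hx⟩, ?_⟩
    rintro j hj ⟨hj0, hjE⟩
    rw [inv_iter_sub π (le_of_lt hj)] at hjE
    exact Nat.find_min h (m := Nat.find h - j) (by omega) ⟨by omega, hjE⟩
  rw [hfind, inv_iter_iter]

lemma nextIn_iter_mem {π : Equiv.Perm (Fin n)} {E : Finset (Fin n)} {x : Fin n}
    (hx : x ∈ E) (k : ℕ) : (nextIn π E)^[k] x ∈ E := by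
  induction k with
  | zero => exact hx
  | succ k ih =>
    rw [Function.iterate_succ_apply']
    exact nextIn_mem ih

lemma nextIn_iter_cancel {π : Equiv.Perm (Fin n)} {E : Finset (Fin n)} {x : Fin n}
    (hx : x ∈ E) (k : ℕ) :
    (nextIn π⁻¹ E)^[k] ((nextIn π E)^[k] x) = x := by
  induction k generalizing x with
  | zero => rfl
  | succ k ih =>
    rw [Function.iterate_succ_apply' (nextIn π E), Function.iterate_succ_apply (nextIn π⁻¹ E),
      nextIn_leftInv (nextIn_iter_mem hx k), ih hx]

lemma minimalPeriod_le (π : Equiv.Perm (Fin n)) (x : Fin n) :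
    Function.minimalPeriod ⇑π x ≤ n := by
  by_contra hlt
  push_neg at hlt
  have hinj : Function.Injective fun k : Fin (n + 1) => (⇑π)^[(k : ℕ)] x := by
    intro a c hac
    have := Function.iterate_injOn_Iio_minimalPeriod (f := ⇑π) (x := x)
      (Set.mem_Iio.2 (lt_of_lt_of_le a.isLt hlt))
      (Set.mem_Iio.2 (lt_of_lt_of_le c.isLt hlt)) hac
    exact Fin.ext this
  have := Fintype.card_le_of_injective _ hinj
  simp only [Fintype.card_fin] at this
  omega

lemma apply_mem_cycleOfF {π : Equiv.Perm (Fin n)} {x y : Fin n}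
    (hy : y ∈ cycleOfF π x) : π y ∈ cycleOfF π x := by
  rw [cycleOfF, Finset.mem_image] at hy ⊢
  obtain ⟨j, hj, rfl⟩ := hy
  have hmp : 0 < Function.minimalPeriod ⇑π x :=
    Function.minimalPeriod_pos_of_mem_periodicPts (perm_periodic π x)
  refine ⟨(j + 1) % Function.minimalPeriod ⇑π x,
    Finset.mem_range.2 (lt_of_lt_of_le (Nat.mod_lt _ hmp) (minimalPeriod_le π x)), ?_⟩
  show (⇑π)^[(j + 1) % Function.minimalPeriod ⇑π x] x = π ((⇑π)^[j] x)
  rw [Function.iterate_mod_minimalPeriod_eq, Function.iterate_succ_apply']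

lemma iterate_mem_cycleOfF {π : Equiv.Perm (Fin n)} {x y : Fin n}
    (hy : y ∈ cycleOfF π x) (k : ℕ) : (⇑π)^[k] y ∈ cycleOfF π x := by
  induction k with
  | zero => exact hy
  | succ k ih =>
    rw [Function.iterate_succ_apply']
    exact apply_mem_cycleOfF ih

lemma nextIn_mem_cycleOfF {π : Equiv.Perm (Fin n)} {E : Finset (Fin n)} {x y : Fin n}
    (hxE : x ∈ E) (hxC : x ∈ cycleOfF π y) : nextIn π E x ∈ cycleOfF π y := by
  have h := exists_iter_mem (π := π) hxE
  rw [nextIn, dif_pos h]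
  exact iterate_mem_cycleOfF hxC _

lemma nextIn_iter_mem_cycleOfF {π : Equiv.Perm (Fin n)} {E : Finset (Fin n)} {x y : Fin n}
    (hxE : x ∈ E) (hxC : x ∈ cycleOfF π y) (k : ℕ) :
    (nextIn π E)^[k] x ∈ cycleOfF π y := by
  induction k with
  | zero => exact hxC
  | succ k ih =>
    rw [Function.iterate_succ_apply']
    exact nextIn_mem_cycleOfF (nextIn_iter_mem hxE k) ih

/-- Key separation lemma: if `i'` is on level `r+1` and `i = π_r^d(i')` with `1 ≤ d ≤ b` and
`i` also on level `r+1`, we get a contradiction; hence `d = 0`. -/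
lemma key_sep {π : Equiv.Perm (Fin n)} {b r : ℕ} {i i' : Fin n} {d : ℕ}
    (hi : i ∈ level π b (r + 1)) (hi' : i' ∈ level π b (r + 1))
    (hd : d ≤ b) (heq : (nextIn π (level π b r))^[d] i' = i) : d = 0 := by
  by_contra hd0
  have hlev : level π b (r + 1) = (level π b r).filter fun i =>
      (∀ k ∈ Finset.Icc 1 b, i < (nextIn π (level π b r))^[k] i) ∧
      (∀ k ∈ Finset.Icc 1 b, i < (nextIn π⁻¹ (level π b r))^[k] i) := rfl
  rw [hlev] at hi hi'
  simp only [Finset.mem_filter] at hi hi'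
  have hdIcc : d ∈ Finset.Icc 1 b := Finset.mem_Icc.2 ⟨Nat.one_le_iff_ne_zero.2 hd0, hd⟩
  have h1 : i' < i := by rw [← heq]; exact hi'.2.1 d hdIcc
  have h2 : i < i' := by
    have h := hi.2.2 d hdIcc
    have hcan : (nextIn π⁻¹ (level π b r))^[d] i = i' := by
      rw [← heq, nextIn_iter_cancel hi'.1]
    rwa [hcan] at h
  exact absurd h2 h1.asymm

lemma level_succ_subset (π : Equiv.Perm (Fin n)) (b r : ℕ) :
    level π b (r + 1) ⊆ level π b r := by
  intro i hi
  have hlev : level π b (r + 1) = (level π b r).filter fun i =>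
      (∀ k ∈ Finset.Icc 1 b, i < (nextIn π (level π b r))^[k] i) ∧
      (∀ k ∈ Finset.Icc 1 b, i < (nextIn π⁻¹ (level π b r))^[k] i) := rfl
  rw [hlev] at hi
  simp only [Finset.mem_filter] at hi
  exact hi.1

lemma inj_aux {π : Equiv.Perm (Fin n)} {b r : ℕ} {i i' : Fin n} {k k' : ℕ}
    (hi : i ∈ level π b (r + 1)) (hi' : i' ∈ level π b (r + 1))
    (hkk' : k ≤ k') (hk' : k' ≤ b)
    (heq : (nextIn π (level π b r))^[k] i = (nextIn π (level π b r))^[k'] i') :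
    i = i' ∧ k = k' := by
  have hiE : i ∈ level π b r := level_succ_subset π b r hi
  have hi'E : i' ∈ level π b r := level_succ_subset π b r hi'
  set d := k' - k with hd
  have hsplit : (nextIn π (level π b r))^[k'] i' =
      (nextIn π (level π b r))^[k] ((nextIn π (level π b r))^[d] i') := by
    rw [← Function.iterate_add_apply, hd, Nat.add_sub_cancel' hkk']
  rw [hsplit] at heq
  have hcan : i = (nextIn π (level π b r))^[d] i' := by
    have h1 := nextIn_iter_cancel (π := π) hiE k
    have h2 := nextIn_iter_cancel (π := π) (nextIn_iter_mem (π := π) hi'E d) k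
    rw [← h1, heq, h2]
  have hd0 : d = 0 := key_sep hi hi' (le_trans (Nat.sub_le _ _) hk') hcan.symm
  have hki : k = k' := by omega
  refine ⟨?_, hki⟩
  rw [hcan, hd0, Function.iterate_zero_apply]

/-- The main counting step: level `r+1` elements of the cycle are at least `b+1` apart
along `π_r`, so there are at most `|E_r ∩ C| / (b+1)` of them. -/
lemma step_card (π : Equiv.Perm (Fin n)) (b r : ℕ) (x : Fin n) :
    (level π b (r + 1) ∩ cycleOfF π x).card * (b + 1) ≤
      (level π b r ∩ cycleOfF π x).card := by
  set C := cycleOfF π x with hC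
  set E := level π b r with hE
  have hmaps : ∀ p ∈ (level π b (r + 1) ∩ C) ×ˢ Finset.range (b + 1),
      (nextIn π E)^[p.2] p.1 ∈ E ∩ C := by
    rintro ⟨i, k⟩ hp
    rw [Finset.mem_product] at hp
    obtain ⟨hiL, _⟩ := hp
    rw [Finset.mem_inter] at hiL
    have hiE : i ∈ E := level_succ_subset π b r hiL.1
    exact Finset.mem_inter.2 ⟨nextIn_iter_mem hiE k,
      nextIn_iter_mem_cycleOfF hiE hiL.2 k⟩
  have hinj : Set.InjOn (fun p : Fin n × ℕ => (nextIn π E)^[p.2] p.1)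
      ((level π b (r + 1) ∩ C) ×ˢ Finset.range (b + 1) : Finset (Fin n × ℕ)) := by
    rintro ⟨i, k⟩ hp ⟨i', k'⟩ hq heq
    simp only [Finset.coe_product, Set.mem_prod, Finset.mem_coe, Finset.mem_inter,
      Finset.mem_range] at hp hq
    simp only at heq
    have hk : k ≤ b := by omega
    have hk' : k' ≤ b := by omega
    rcases le_total k k' with h | h
    · obtain ⟨h1, h2⟩ := inj_aux hp.1.1 hq.1.1 h hk' heq
      simp [h1, h2]
    · obtain ⟨h1, h2⟩ := inj_aux hq.1.1 hp.1.1 h hk heq.symm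
      simp [h1, h2]
  have := Finset.card_le_card_of_injOn _ hmaps hinj
  rwa [Finset.card_product, Finset.card_range] at this

/-- For every cycle `C` of `π` and every `r ≥ 1` (here 0-indexed: `E_{r+1}` is
`level π b r`), the number of elements of `C` on level `r` satisfies
`|E_r ∩ C| ≤ |C| / (b+1)^{r−1}`. -/
theorem card_level_inter_cycle_le (n b : ℕ) (hb : 1 ≤ b) (π : Equiv.Perm (Fin n)) (x : Fin n)
    (C : Finset (Fin n)) (hC : C = cycleOfF π x) :
    ∀ r : ℕ, (((level π b r) ∩ C).card : ℝ) ≤ (C.card : ℝ) / ((b : ℝ) + 1) ^ r := by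
  intro r
  induction r with
  | zero =>
    simp [level, Finset.univ_inter]
  | succ r ih =>
    have key : (level π b (r + 1) ∩ C).card * (b + 1) ≤ (level π b r ∩ C).card := by
      rw [hC]; exact step_card π b r x
    have hb1 : (0 : ℝ) < (b : ℝ) + 1 := by positivity
    have h1 : ((level π b (r + 1) ∩ C).card : ℝ) ≤
        ((level π b r ∩ C).card : ℝ) / ((b : ℝ) + 1) := by
      rw [le_div_iff₀ hb1]
      exact_mod_cast key
    calc ((level π b (r + 1) ∩ C).card : ℝ)
        ≤ ((level π b r ∩ C).card : ℝ) / ((b : ℝ) + 1) := h1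
      _ ≤ ((C.card : ℝ) / ((b : ℝ) + 1) ^ r) / ((b : ℝ) + 1) := by gcongr
      _ = (C.card : ℝ) / ((b : ℝ) + 1) ^ (r + 1) := by rw [div_div, ← pow_succ]
end

section
/- Let C be a cycle of π, let r ≥ 1, and let m ∈ E_r ∩ C with |E_r ∩ C| > b. Then m ∈ E_{r+1} (i.e., m < π_r^k(m) for all k ∈ {−b,…,b} \ {0}) if and only if m is the minimum among all elements of C lying on the range π_r^{−b}(m) … m together with the range m … π_r^b(m) along π. -/
attribute [local instance] Classical.propDecidable

variable {n : ℕ}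

/-- `len(u,w) = min{k > 0 : π^k(u) = w}` (0 if `w` is not reachable from `u`). -/
noncomputable def lenTo (π : Equiv.Perm (Fin n)) (u w : Fin n) : ℕ :=
  if h : ∃ k, 0 < k ∧ (⇑π)^[k] u = w then Nat.find h else 0

/-- The range `u … w`: the elements `u, π(u), π²(u), …, w` obtained by following `π` from `u`
to `w` (the whole cycle if `u = w`). -/
noncomputable def rangeTo (π : Equiv.Perm (Fin n)) (u w : Fin n) : Finset (Fin n) :=
  (Finset.range (lenTo π u w + 1)).image fun j => (⇑π)^[j] u

/-! ### Auxiliary lemmas -/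

lemma iterate_fix (σ : Equiv.Perm (Fin n)) (x : Fin n) : (⇑σ)^[orderOf σ] x = x := by
  rw [Equiv.Perm.iterate_eq_pow, pow_orderOf_eq_one]; rfl

lemma inv_iterate_iterate (σ : Equiv.Perm (Fin n)) (k : ℕ) (x : Fin n) :
    (⇑σ⁻¹)^[k] ((⇑σ)^[k] x) = x := by
  rw [Equiv.Perm.iterate_eq_pow, Equiv.Perm.iterate_eq_pow, ← Equiv.Perm.mul_apply, inv_pow,
    inv_mul_cancel, Equiv.Perm.one_apply]

lemma inv_iterate_of_le (σ : Equiv.Perm (Fin n)) {a c : ℕ} (h : a ≤ c) (x : Fin n) :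
    (⇑σ⁻¹)^[a] ((⇑σ)^[c] x) = (⇑σ)^[c - a] x := by
  conv_lhs => rw [show c = a + (c - a) by omega, Function.iterate_add_apply,
    inv_iterate_iterate]

/-- the length of one `nextIn`-step. -/
noncomputable def stepLen (σ : Equiv.Perm (Fin n)) (E : Finset (Fin n)) (x : Fin n) : ℕ :=
  if h : ∃ k, 0 < k ∧ (⇑σ)^[k] x ∈ E then Nat.find h else 0

section Spec

variable {σ : Equiv.Perm (Fin n)} {E : Finset (Fin n)} {x : Fin n}

lemma good_of_mem (hx : x ∈ E) : ∃ k, 0 < k ∧ (⇑σ)^[k] x ∈ E :=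
  ⟨orderOf σ, orderOf_pos σ, by rwa [iterate_fix]⟩

lemma stepLen_pos (hx : x ∈ E) : 0 < stepLen σ E x := by
  rw [stepLen, dif_pos (good_of_mem hx)]
  exact (Nat.find_spec (good_of_mem hx)).1

lemma nextIn_eq (hx : x ∈ E) : nextIn σ E x = (⇑σ)^[stepLen σ E x] x := by
  rw [nextIn, dif_pos (good_of_mem hx), stepLen, dif_pos (good_of_mem hx)]

lemma nextIn_mem_s4 (hx : x ∈ E) : nextIn σ E x ∈ E := by
  rw [nextIn_eq hx, stepLen, dif_pos (good_of_mem hx)]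
  exact (Nat.find_spec (good_of_mem hx)).2

lemma stepLen_min (hx : x ∈ E) {j : ℕ} (h1 : 0 < j) (h2 : j < stepLen σ E x) :
    (⇑σ)^[j] x ∉ E := by
  rw [stepLen, dif_pos (good_of_mem hx)] at h2
  have := Nat.find_min (good_of_mem hx) h2
  push_neg at this
  exact this h1

lemma stepLen_le (hx : x ∈ E) {j : ℕ} (h1 : 0 < j) (h2 : (⇑σ)^[j] x ∈ E) :
    stepLen σ E x ≤ j := by
  rw [stepLen, dif_pos (good_of_mem hx)]
  exact Nat.find_min' _ ⟨h1, h2⟩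

end Spec

/-- total number of `π`-steps needed for `i` iterations of `nextIn`. -/
noncomputable def ksum (σ : Equiv.Perm (Fin n)) (E : Finset (Fin n)) (x : Fin n) : ℕ → ℕ
  | 0 => 0
  | i + 1 => ksum σ E x i + stepLen σ E ((nextIn σ E)^[i] x)

section KSum

variable {σ : Equiv.Perm (Fin n)} {E : Finset (Fin n)} {x : Fin n}

lemma nextIn_iter_mem_s4 (hx : x ∈ E) (i : ℕ) : (nextIn σ E)^[i] x ∈ E := by
  induction i with
  | zero => exact hx
  | succ i ih => rw [Function.iterate_succ_apply']; exact nextIn_mem_s4 ih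

lemma nextIn_iter_eq (hx : x ∈ E) (i : ℕ) :
    (nextIn σ E)^[i] x = (⇑σ)^[ksum σ E x i] x := by
  induction i with
  | zero => rfl
  | succ i ih =>
    rw [ksum, Function.iterate_succ_apply', nextIn_eq (nextIn_iter_mem_s4 hx i), ih,
      ← Function.iterate_add_apply, Nat.add_comm]

lemma ksum_lt (hx : x ∈ E) (i : ℕ) : ksum σ E x i < ksum σ E x (i + 1) := by
  rw [ksum]
  exact Nat.lt_add_of_pos_right (stepLen_pos (nextIn_iter_mem_s4 hx i))

lemma ksum_mono (hx : x ∈ E) {i j : ℕ} (h : i ≤ j) : ksum σ E x i ≤ ksum σ E x j := by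
  induction j with
  | zero =>
    have hi : i = 0 := by omega
    subst hi
    exact le_rfl
  | succ j ih =>
    rcases eq_or_lt_of_le h with h' | h'
    · subst h'
      exact le_rfl
    · exact le_trans (ih (by omega)) (le_of_lt (ksum_lt hx j))

lemma ksum_strict (hx : x ∈ E) {i j : ℕ} (h : i < j) : ksum σ E x i < ksum σ E x j :=
  lt_of_lt_of_le (ksum_lt hx i) (ksum_mono hx h)

lemma ksum_pos (hx : x ∈ E) {i : ℕ} (h : 0 < i) : 0 < ksum σ E x i :=
  ksum_strict hx h

lemma ksum_shift (hx : x ∈ E) (i : ℕ) :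
    ksum σ E x (i + 1) = stepLen σ E x + ksum σ E (nextIn σ E x) i := by
  induction i with
  | zero => simp [ksum]
  | succ i ih =>
    rw [ksum, ih, ksum, Function.iterate_succ_apply]
    omega

lemma enum (j : ℕ) : ∀ x : Fin n, x ∈ E → 0 < j → (⇑σ)^[j] x ∈ E →
    ∃ i, 0 < i ∧ (nextIn σ E)^[i] x = (⇑σ)^[j] x ∧ ksum σ E x i = j := by
  induction j using Nat.strong_induction_on with
  | _ j IH =>
    intro x hx hj hjE
    have hd : stepLen σ E x ≤ j := stepLen_le hx hj hjE
    rcases eq_or_lt_of_le hd with heq | hlt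
    · refine ⟨1, one_pos, ?_, ?_⟩
      · rw [Function.iterate_one, nextIn_eq hx, heq]
      · simp [ksum, heq]
    · have hdpos : 0 < stepLen σ E x := stepLen_pos hx
      have hxE' : nextIn σ E x ∈ E := nextIn_mem_s4 hx
      have hiter : (⇑σ)^[j - stepLen σ E x] (nextIn σ E x) = (⇑σ)^[j] x := by
        rw [nextIn_eq hx, ← Function.iterate_add_apply]
        congr 1; omega
      obtain ⟨i, hipos, hie, hik⟩ := IH (j - stepLen σ E x) (by omega) (nextIn σ E x) hxE'
        (by omega) (by rw [hiter]; exact hjE)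
      refine ⟨i + 1, by omega, ?_, ?_⟩
      · rw [Function.iterate_succ_apply, hie, hiter]
      · rw [ksum_shift hx, hik]; omega

lemma nextIn_inv_nextIn (hx : x ∈ E) : nextIn σ⁻¹ E (nextIn σ E x) = x := by
  have hy : nextIn σ E x = (⇑σ)^[stepLen σ E x] x := nextIn_eq hx
  have hyE : nextIn σ E x ∈ E := nextIn_mem_s4 hx
  have hdpos : 0 < stepLen σ E x := stepLen_pos hx
  have h1 : (⇑σ⁻¹)^[stepLen σ E x] (nextIn σ E x) = x := by
    rw [hy, inv_iterate_iterate]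
  have hle : stepLen σ⁻¹ E (nextIn σ E x) ≤ stepLen σ E x :=
    stepLen_le hyE hdpos (by rw [h1]; exact hx)
  have hpos : 0 < stepLen σ⁻¹ E (nextIn σ E x) := stepLen_pos hyE
  have heq : stepLen σ⁻¹ E (nextIn σ E x) = stepLen σ E x := by
    rcases eq_or_lt_of_le hle with h | h
    · exact h
    · exfalso
      have hmem : (⇑σ⁻¹)^[stepLen σ⁻¹ E (nextIn σ E x)] (nextIn σ E x) ∈ E := by
        rw [← nextIn_eq hyE]; exact nextIn_mem_s4 hyE
      obtain ⟨d', hd'⟩ : ∃ d', stepLen σ⁻¹ E (nextIn σ E x) = d' := ⟨_, rfl⟩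
      rw [hd'] at hmem h hpos
      rw [hy, inv_iterate_of_le σ (le_of_lt h)] at hmem
      exact stepLen_min hx (by omega) (by omega) hmem
  rw [nextIn_eq hyE, heq, h1]

lemma nextIn_nextIn_inv (hx : x ∈ E) : nextIn σ E (nextIn σ⁻¹ E x) = x := by
  have := nextIn_inv_nextIn (σ := σ⁻¹) hx
  rwa [inv_inv] at this

end KSum

section Peel

variable {σ : Equiv.Perm (Fin n)} {E : Finset (Fin n)}

lemma peel : ∀ (k : ℕ) (x : Fin n), x ∈ E → (nextIn σ⁻¹ E)^[k] ((nextIn σ E)^[k] x) = x := by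
  intro k
  induction k with
  | zero => intro x _; rfl
  | succ k ih =>
    intro x hx
    rw [Function.iterate_succ_apply (nextIn σ E) k x,
      Function.iterate_succ_apply' (nextIn σ⁻¹ E) k,
      ih _ (nextIn_mem_s4 hx), nextIn_inv_nextIn hx]

lemma peel' (k : ℕ) (x : Fin n) (hx : x ∈ E) :
    (nextIn σ E)^[k] ((nextIn σ⁻¹ E)^[k] x) = x := by
  have := peel (σ := σ⁻¹) k x hx
  rwa [inv_inv] at this

lemma cancel_iter {x : Fin n} (hx : x ∈ E) {i k : ℕ}
    (h : (nextIn σ E)^[i + k] x = (nextIn σ E)^[i] x) : (nextIn σ E)^[k] x = x := by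
  have h2 := congrArg ((nextIn σ⁻¹ E)^[i]) h
  rw [Function.iterate_add_apply, peel i _ (nextIn_iter_mem_s4 hx k), peel i x hx] at h2
  exact h2

lemma lenTo_eq_ksum {x : Fin n} (hx : x ∈ E) {t : ℕ} (ht : 0 < t)
    (hdist : ∀ i, 0 < i → i < t → (nextIn σ E)^[i] x ≠ (nextIn σ E)^[t] x) :
    lenTo σ x ((nextIn σ E)^[t] x) = ksum σ E x t := by
  have hw : (nextIn σ E)^[t] x = (⇑σ)^[ksum σ E x t] x := nextIn_iter_eq hx t
  have hkpos : 0 < ksum σ E x t := ksum_pos hx ht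
  have hex : ∃ k, 0 < k ∧ (⇑σ)^[k] x = (nextIn σ E)^[t] x := ⟨ksum σ E x t, hkpos, hw.symm⟩
  rw [lenTo, dif_pos hex]
  have h1 : Nat.find hex ≤ ksum σ E x t := Nat.find_min' _ ⟨hkpos, hw.symm⟩
  obtain ⟨hjpos, hjeq⟩ := Nat.find_spec hex
  have hjE : (⇑σ)^[Nat.find hex] x ∈ E := by rw [hjeq]; exact nextIn_iter_mem_s4 hx t
  obtain ⟨i, hipos, hie, hik⟩ := enum (Nat.find hex) x hx hjpos hjE
  have hti : t ≤ i := by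
    by_contra hc
    push_neg at hc
    exact hdist i hipos hc (by rw [hie, hjeq])
  have h2 : ksum σ E x t ≤ ksum σ E x i := ksum_mono hx hti
  omega

lemma mem_rangeTo {u w y : Fin n} :
    y ∈ rangeTo σ u w ↔ ∃ j, j ≤ lenTo σ u w ∧ (⇑σ)^[j] u = y := by
  simp [rangeTo, Nat.lt_succ_iff]

lemma mem_rangeTo_seg {x : Fin n} (hx : x ∈ E) {i j : ℕ}
    (h1 : ksum σ E x i ≤ j) (h2 : j ≤ ksum σ E x (i + 1)) :
    (⇑σ)^[j] x ∈ rangeTo σ ((nextIn σ E)^[i] x) (nextIn σ E ((nextIn σ E)^[i] x)) := by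
  have hxiE : (nextIn σ E)^[i] x ∈ E := nextIn_iter_mem_s4 hx i
  have hstep : lenTo σ ((nextIn σ E)^[i] x) (nextIn σ E ((nextIn σ E)^[i] x)) =
      stepLen σ E ((nextIn σ E)^[i] x) := by
    have := lenTo_eq_ksum (σ := σ) hxiE (t := 1) one_pos (fun a ha hb => absurd hb (by omega))
    simpa [ksum] using this
  rw [mem_rangeTo]
  refine ⟨j - ksum σ E x i, ?_, ?_⟩
  · rw [hstep]
    have h3 : ksum σ E x (i + 1) = ksum σ E x i + stepLen σ E ((nextIn σ E)^[i] x) := by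
      rw [ksum]
    omega
  · rw [nextIn_iter_eq hx i, ← Function.iterate_add_apply]
    congr 1
    omega

lemma iter_mul_period {f : Fin n → Fin n} {x : Fin n} {k : ℕ} (hk : f^[k] x = x) (q : ℕ) :
    f^[k * q] x = x := by
  induction q with
  | zero => rfl
  | succ q ih => rw [Nat.mul_succ, Function.iterate_add_apply, hk, ih]

lemma iter_period {f : Fin n → Fin n} {x : Fin n} {k : ℕ} (hk : f^[k] x = x) (i : ℕ) :
    f^[i] x = f^[i % k] x := by
  conv_lhs => rw [← Nat.mod_add_div i k, Function.iterate_add_apply, iter_mul_period hk]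

lemma dist_ne {m : Fin n} (hm : m ∈ E) {b : ℕ}
    (hcard : b < (E ∩ cycleOfF σ m).card) {k : ℕ} (hk1 : 0 < k) (hkb : k ≤ b) :
    (nextIn σ E)^[k] m ≠ m := by
  intro h
  have hsub : E ∩ cycleOfF σ m ⊆ (Finset.range k).image fun i => (nextIn σ E)^[i] m := by
    intro e he
    rw [Finset.mem_inter] at he
    obtain ⟨heE, hecyc⟩ := he
    rw [cycleOfF, Finset.mem_image] at hecyc
    obtain ⟨j, _, hje⟩ := hecyc
    rcases Nat.eq_zero_or_pos j with hj0 | hjpos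
    · subst hj0
      exact Finset.mem_image.2 ⟨0, Finset.mem_range.2 hk1, hje⟩
    · obtain ⟨i, hipos, hie, _⟩ := enum j m hm hjpos (by rw [hje]; exact heE)
      refine Finset.mem_image.2 ⟨i % k, Finset.mem_range.2 (Nat.mod_lt _ hk1), ?_⟩
      rw [← iter_period h i, hie, hje]
  have hc1 := Finset.card_le_card hsub
  have hc2 := Finset.card_image_le (s := Finset.range k) (f := fun i => (nextIn σ E)^[i] m)
  rw [Finset.card_range] at hc2
  omega

lemma dist_ne' {m : Fin n} (hm : m ∈ E) {b : ℕ}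
    (hcard : b < (E ∩ cycleOfF σ m).card) {k : ℕ} (hk1 : 0 < k) (hkb : k ≤ b) :
    (nextIn σ⁻¹ E)^[k] m ≠ m := by
  intro h
  have h2 : (nextIn σ E)^[k] m = m := by
    conv_lhs => rw [← h]
    exact peel' k m hm
  exact dist_ne hm hcard hk1 hkb h2

end Peel

lemma ivt {f : ℕ → ℕ} (hf : ∀ i, f i < f (i + 1)) (h0 : f 0 = 0) {t j : ℕ} (ht : 0 < t)
    (hj : j ≤ f t) : ∃ i, i < t ∧ f i ≤ j ∧ j ≤ f (i + 1) := by
  induction t with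
  | zero => omega
  | succ t ih =>
    rcases Nat.eq_zero_or_pos t with ht0 | htpos
    · subst ht0
      exact ⟨0, by omega, by omega, hj⟩
    · by_cases hjt : j ≤ f t
      · obtain ⟨i, h1, h2, h3⟩ := ih htpos hjt
        exact ⟨i, by omega, h2, h3⟩
      · exact ⟨t, by omega, by omega, hj⟩

/-- **Key segment lemma.**  If `u ∈ E_s` and `w` is the next element of `E_s` after `u`,
then every element on the `π`-range `u … w` is at least `min u w`. -/
lemma seg (π : Equiv.Perm (Fin n)) (b : ℕ) :
    ∀ s : ℕ, ∀ u : Fin n, u ∈ level π b s →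
      ∀ y ∈ rangeTo π u (nextIn π (level π b s) u),
        min u (nextIn π (level π b s) u) ≤ y := by
  intro s
  induction s with
  | zero =>
    intro u hu y hy
    rw [mem_rangeTo] at hy
    obtain ⟨j, hj, hjy⟩ := hy
    have hlen : lenTo π u (nextIn π (level π b 0) u) = stepLen π (level π b 0) u := by
      have := lenTo_eq_ksum (σ := π) hu (t := 1) one_pos (fun a ha hb => absurd hb (by omega))
      simpa [ksum] using this
    rw [hlen] at hj
    rcases Nat.eq_zero_or_pos j with rfl | hjpos
    · rw [← hjy]
      exact min_le_left _ _
    · rcases eq_or_lt_of_le hj with heq | hlt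
      · rw [← hjy, heq, ← nextIn_eq hu]
        exact min_le_right _ _
      · exfalso
        have : (⇑π)^[j] u ∉ level π b 0 := stepLen_min hu hjpos hlt
        exact this (by simp [level])
  | succ s IH =>
    intro u hu y hy
    set E := level π b s with hEdef
    set E' := level π b (s + 1) with hE'def
    have hmemlevel : ∀ z : Fin n, z ∈ E' ↔ z ∈ E ∧
        ((∀ k ∈ Finset.Icc 1 b, z < (nextIn π E)^[k] z) ∧
         (∀ k ∈ Finset.Icc 1 b, z < (nextIn π⁻¹ E)^[k] z)) := by
      intro z
      rw [hE'def, hEdef]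
      simp only [level, Finset.mem_filter]
    have hu2 := hu
    rw [hmemlevel] at hu2
    obtain ⟨huE, hufwd, hubwd⟩ := hu2
    set w := nextIn π E' u with hwdef
    have hq : 0 < stepLen π E' u := stepLen_pos hu
    have hw : w = (⇑π)^[stepLen π E' u] u := nextIn_eq hu
    have hwE' : w ∈ E' := nextIn_mem_s4 hu
    have hwE : w ∈ E := ((hmemlevel w).1 hwE').1
    obtain ⟨hwfwd, hwbwd⟩ : (∀ k ∈ Finset.Icc 1 b, w < (nextIn π E)^[k] w) ∧
        (∀ k ∈ Finset.Icc 1 b, w < (nextIn π⁻¹ E)^[k] w) := ((hmemlevel w).1 hwE').2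
    obtain ⟨t, htpos, hte, htk⟩ := enum (stepLen π E' u) u huE hq (by rw [← hw]; exact hwE)
    have hteW : (nextIn π E)^[t] u = w := by rw [hte, ← hw]
    have hint : ∀ i, 0 < i → i < t → (nextIn π E)^[i] u ∉ E' := by
      intro i h1 h2
      rw [nextIn_iter_eq huE i]
      exact stepLen_min hu (ksum_pos huE h1) (by rw [← htk]; exact ksum_strict huE h2)
    -- descent claim
    have D : ∀ V : ℕ, ∀ i : ℕ, i ≤ t → ((nextIn π E)^[i] u : ℕ) < V →
        min u w ≤ (nextIn π E)^[i] u := by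
      intro V
      induction V with
      | zero => intro i _ h; omega
      | succ V IHV =>
        intro i hit hval
        rcases Nat.eq_zero_or_pos i with rfl | hipos
        · simpa using min_le_left u w
        rcases eq_or_lt_of_le hit with rfl | hilt
        · rw [hteW]
          exact min_le_right u w
        have hxiE : (nextIn π E)^[i] u ∈ E := nextIn_iter_mem_s4 huE i
        have hxiE' : (nextIn π E)^[i] u ∉ E' := hint i hipos hilt
        have hfail : ¬ ((∀ k ∈ Finset.Icc 1 b, (nextIn π E)^[i] u < (nextIn π E)^[k] ((nextIn π E)^[i] u)) ∧
            (∀ k ∈ Finset.Icc 1 b, (nextIn π E)^[i] u < (nextIn π⁻¹ E)^[k] ((nextIn π E)^[i] u))) := by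
          intro hcontra
          exact hxiE' ((hmemlevel _).2 ⟨hxiE, hcontra⟩)
        rcases not_and_or.1 hfail with hf | hf
        · push_neg at hf
          obtain ⟨k, hk, hkle⟩ := hf
          rw [Finset.mem_Icc] at hk
          have hsplit : (nextIn π E)^[k] ((nextIn π E)^[i] u) = (nextIn π E)^[k + i] u := by
            rw [← Function.iterate_add_apply]
          rw [hsplit] at hkle
          by_cases hkt : k + i ≤ t
          · have hne : (nextIn π E)^[k + i] u ≠ (nextIn π E)^[i] u := by
              intro hcontra
              rw [Nat.add_comm] at hcontra
              have hcan : (nextIn π E)^[k] u = u := cancel_iter huE hcontra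
              have := hufwd k (Finset.mem_Icc.2 ⟨hk.1, hk.2⟩)
              rw [hcan] at this
              exact lt_irrefl _ this
            have hlt2 : (nextIn π E)^[k + i] u < (nextIn π E)^[i] u :=
              lt_of_le_of_ne hkle hne
            have hvv : ((nextIn π E)^[k + i] u : ℕ) < ((nextIn π E)^[i] u : ℕ) := hlt2
            have h5 : min u w ≤ (nextIn π E)^[k + i] u := IHV (k + i) hkt (by omega)
            exact le_trans h5 (le_of_lt hlt2)
          · push_neg at hkt
            have hsplit2 : (nextIn π E)^[k + i] u = (nextIn π E)^[k + i - t] w := by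
              rw [← hteW, ← Function.iterate_add_apply]
              congr 1
              omega
            have hwlt : w < (nextIn π E)^[k + i - t] w :=
              hwfwd (k + i - t) (Finset.mem_Icc.2 ⟨by omega, by omega⟩)
            rw [hsplit2] at hkle
            exact le_trans (min_le_right u w) (le_of_lt (lt_of_lt_of_le hwlt hkle))
        · push_neg at hf
          obtain ⟨k, hk, hkle⟩ := hf
          rw [Finset.mem_Icc] at hk
          by_cases hik : k ≤ i
          · obtain ⟨i', rfl⟩ : ∃ i', i = k + i' := ⟨i - k, by omega⟩
            have hsplit : (nextIn π⁻¹ E)^[k] ((nextIn π E)^[k + i'] u) = (nextIn π E)^[i'] u := by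
              rw [Function.iterate_add_apply, peel k _ (nextIn_iter_mem_s4 huE i')]
            rw [hsplit] at hkle
            rcases Nat.eq_zero_or_pos i' with rfl | hi'pos
            · exact le_trans (min_le_left u w) hkle
            · have hne : (nextIn π E)^[i'] u ≠ (nextIn π E)^[k + i'] u := by
                intro hcontra
                have hcontra2 : (nextIn π E)^[i' + k] u = (nextIn π E)^[i'] u := by
                  rw [Nat.add_comm, ← hcontra]
                have hcan : (nextIn π E)^[k] u = u := cancel_iter huE hcontra2
                have := hufwd k (Finset.mem_Icc.2 ⟨hk.1, hk.2⟩)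
                rw [hcan] at this
                exact lt_irrefl _ this
              have hlt2 : (nextIn π E)^[i'] u < (nextIn π E)^[k + i'] u :=
                lt_of_le_of_ne hkle hne
              have hvv : ((nextIn π E)^[i'] u : ℕ) < ((nextIn π E)^[k + i'] u : ℕ) := hlt2
              have h5 : min u w ≤ (nextIn π E)^[i'] u := IHV i' (by omega) (by omega)
              exact le_trans h5 hkle
          · push_neg at hik
            obtain ⟨k', hk'⟩ : ∃ k', k = k' + i := ⟨k - i, by omega⟩
            have hsplit : (nextIn π⁻¹ E)^[k] ((nextIn π E)^[i] u) = (nextIn π⁻¹ E)^[k'] u := by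
              rw [hk', Function.iterate_add_apply, peel i u huE]
            rw [hsplit] at hkle
            have hult : u < (nextIn π⁻¹ E)^[k'] u :=
              hubwd k' (Finset.mem_Icc.2 ⟨by omega, by omega⟩)
            exact le_trans (min_le_left u w) (le_of_lt (lt_of_lt_of_le hult hkle))
    -- decomposition of the range
    rw [mem_rangeTo] at hy
    obtain ⟨j, hj, hjy⟩ := hy
    have hlen : lenTo π u w = ksum π E u t := by
      have hdist : ∀ i, 0 < i → i < t → (nextIn π E)^[i] u ≠ (nextIn π E)^[t] u := by
        intro i h1 h2 hcontra
        exact hint i h1 h2 (by rw [hcontra, hteW]; exact hwE')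
      have := lenTo_eq_ksum huE htpos hdist
      rwa [hteW] at this
    rw [hlen] at hj
    obtain ⟨i, hit, h1, h2⟩ := ivt (fun i => ksum_lt huE i) rfl htpos hj
    have hxiE : (nextIn π E)^[i] u ∈ E := nextIn_iter_mem_s4 huE i
    have hmem : y ∈ rangeTo π ((nextIn π E)^[i] u) (nextIn π E ((nextIn π E)^[i] u)) := by
      rw [← hjy]
      exact mem_rangeTo_seg huE h1 h2
    have hIH := IH ((nextIn π E)^[i] u) hxiE y hmem
    have hD1 : min u w ≤ (nextIn π E)^[i] u :=
      D (((nextIn π E)^[i] u : ℕ) + 1) i (le_of_lt hit) (Nat.lt_succ_self _)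
    have hD2 : min u w ≤ nextIn π E ((nextIn π E)^[i] u) := by
      rw [← Function.iterate_succ_apply' (nextIn π E) i u]
      exact D (((nextIn π E)^[i + 1] u : ℕ) + 1) (i + 1) (by omega) (Nat.lt_succ_self _)
    exact le_trans (le_min hD1 hD2) hIH

/-- Let `C` be a cycle of `π`, `r ≥ 1`, and `m ∈ E_r ∩ C` with
`|E_r ∩ C| > b` (here `E_r = level π b s` with `s = r - 1`, `π_r = nextIn π (level π b s)`).
Then `m ∈ E_{r+1}` if and only if `m` is the minimum among all elements lying on the range
`π_r^{−b}(m) … m` together with the range `m … π_r^b(m)` along `π`. -/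
theorem mem_next_level_iff_min_range (n b : ℕ) (hb : 1 ≤ b) (π : Equiv.Perm (Fin n))
    (m : Fin n) (C : Finset (Fin n)) (hC : C = cycleOfF π m)
    (s : ℕ) (hm : m ∈ level π b s) (hcard : b < ((level π b s) ∩ C).card) :
    m ∈ level π b (s + 1) ↔
      ∀ y ∈ rangeTo π (stepB π⁻¹ b (level π b s) m) m ∪
          rangeTo π m (stepB π b (level π b s) m),
        m ≤ y := by
  subst hC
  simp only [stepB]
  set E := level π b s with hEdef
  have hmemlevel : ∀ z : Fin n, z ∈ level π b (s + 1) ↔ z ∈ E ∧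
      ((∀ k ∈ Finset.Icc 1 b, z < (nextIn π E)^[k] z) ∧
       (∀ k ∈ Finset.Icc 1 b, z < (nextIn π⁻¹ E)^[k] z)) := by
    intro z
    rw [hEdef]
    simp only [level, Finset.mem_filter]
  have hb' : 0 < b := hb
  have hfwdne : ∀ k, 0 < k → k ≤ b → (nextIn π E)^[k] m ≠ m :=
    fun k h1 h2 => dist_ne hm hcard h1 h2
  have hbwdne : ∀ k, 0 < k → k ≤ b → (nextIn π⁻¹ E)^[k] m ≠ m :=
    fun k h1 h2 => dist_ne' hm hcard h1 h2
  have hdistf : ∀ i, 0 < i → i < b → (nextIn π E)^[i] m ≠ (nextIn π E)^[b] m := by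
    intro i h1 h2 hc
    have hc2 : (nextIn π E)^[i + (b - i)] m = (nextIn π E)^[i] m := by
      rw [show i + (b - i) = b by omega, hc]
    exact hfwdne (b - i) (by omega) (by omega) (cancel_iter hm hc2)
  have hlenf : lenTo π m ((nextIn π E)^[b] m) = ksum π E m b := lenTo_eq_ksum hm hb' hdistf
  set x := (nextIn π⁻¹ E)^[b] m with hxdef
  have hxE : x ∈ E := nextIn_iter_mem_s4 hm b
  have hxiter : ∀ i, i ≤ b → (nextIn π E)^[i] x = (nextIn π⁻¹ E)^[b - i] m := by
    intro i hi
    have h1 : x = (nextIn π⁻¹ E)^[i] ((nextIn π⁻¹ E)^[b - i] m) := by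
      rw [← Function.iterate_add_apply, show i + (b - i) = b by omega]
    rw [h1, peel' i _ (nextIn_iter_mem_s4 hm (b - i))]
  have hxb : (nextIn π E)^[b] x = m := by
    rw [hxiter b le_rfl]
    simp
  have hdistb : ∀ i, 0 < i → i < b → (nextIn π E)^[i] x ≠ (nextIn π E)^[b] x := by
    intro i h1 h2 hc
    rw [hxiter i (le_of_lt h2), hxb] at hc
    exact hbwdne (b - i) (by omega) (by omega) hc
  have hlenb : lenTo π x m = ksum π E x b := by
    have := lenTo_eq_ksum hxE hb' hdistb
    rwa [hxb] at this
  constructor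
  · intro hmem y hy
    rw [hmemlevel] at hmem
    obtain ⟨_, hfwd, hbwd⟩ := hmem
    have hfwd' : ∀ k, k ≤ b → m ≤ (nextIn π E)^[k] m := by
      intro k hk
      rcases Nat.eq_zero_or_pos k with rfl | hpos
      · simp
      · exact le_of_lt (hfwd k (Finset.mem_Icc.2 ⟨hpos, hk⟩))
    have hbwd' : ∀ k, k ≤ b → m ≤ (nextIn π⁻¹ E)^[k] m := by
      intro k hk
      rcases Nat.eq_zero_or_pos k with rfl | hpos
      · simp
      · exact le_of_lt (hbwd k (Finset.mem_Icc.2 ⟨hpos, hk⟩))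
    rw [Finset.mem_union] at hy
    rcases hy with hy | hy
    · -- backward range
      rw [mem_rangeTo] at hy
      obtain ⟨j, hj, hjy⟩ := hy
      rw [hlenb] at hj
      obtain ⟨i, hit, h1, h2⟩ := ivt (fun i => ksum_lt hxE i) rfl hb' hj
      have hseg := seg π b s ((nextIn π E)^[i] x) (nextIn_iter_mem_s4 hxE i) y
        (by rw [← hjy]; exact mem_rangeTo_seg hxE h1 h2)
      have e1 : m ≤ (nextIn π E)^[i] x := by
        rw [hxiter i (by omega)]
        exact hbwd' (b - i) (by omega)
      have e2 : m ≤ nextIn π E ((nextIn π E)^[i] x) := by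
        rw [← Function.iterate_succ_apply' (nextIn π E) i x, hxiter (i + 1) (by omega)]
        exact hbwd' (b - (i + 1)) (by omega)
      exact le_trans (le_min e1 e2) hseg
    · -- forward range
      rw [mem_rangeTo] at hy
      obtain ⟨j, hj, hjy⟩ := hy
      rw [hlenf] at hj
      obtain ⟨i, hit, h1, h2⟩ := ivt (fun i => ksum_lt hm i) rfl hb' hj
      have hseg := seg π b s ((nextIn π E)^[i] m) (nextIn_iter_mem_s4 hm i) y
        (by rw [← hjy]; exact mem_rangeTo_seg hm h1 h2)
      have e1 : m ≤ (nextIn π E)^[i] m := hfwd' i (by omega)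
      have e2 : m ≤ nextIn π E ((nextIn π E)^[i] m) := by
        rw [← Function.iterate_succ_apply' (nextIn π E) i m]
        exact hfwd' (i + 1) (by omega)
      exact le_trans (le_min e1 e2) hseg
  · intro h
    rw [hmemlevel]
    refine ⟨hm, ?_, ?_⟩
    · intro k hk
      rw [Finset.mem_Icc] at hk
      have hmemr : (nextIn π E)^[k] m ∈ rangeTo π m ((nextIn π E)^[b] m) := by
        rw [mem_rangeTo]
        exact ⟨ksum π E m k, by rw [hlenf]; exact ksum_mono hm hk.2,
          (nextIn_iter_eq hm k).symm⟩
      have hle := h _ (Finset.mem_union_right _ hmemr)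
      exact lt_of_le_of_ne hle (Ne.symm (hfwdne k hk.1 hk.2))
    · intro k hk
      rw [Finset.mem_Icc] at hk
      have hmemr : (nextIn π⁻¹ E)^[k] m ∈ rangeTo π x m := by
        rw [mem_rangeTo]
        refine ⟨ksum π E x (b - k), by rw [hlenb]; exact ksum_mono hxE (by omega), ?_⟩
        rw [← nextIn_iter_eq hxE (b - k), hxiter (b - k) (by omega)]
        congr 1
        omega
      have hle := h _ (Finset.mem_union_left _ hmemr)
      exact lt_of_le_of_ne hle (Ne.symm (hbwdne k hk.1 hk.2))
end
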